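/- Let a ∈ (0,1) and define b₀ := (ln 2)^{a−2} (a² − (1+3 ln 2) a + 2(ln 2)²)/2, b₁ := (a/2)(ln 2)^{a−2}(1 − a + 2 ln 2), b₂ := (a/8)(ln 2)^{a−2}(1 − a + ln 2), and w : ℝ²∖{0} → ℝ by w(x) = (−ln |x|)^a for 0 < |x| ≤ 1/2 and w(x) = b₀ + b₁/|x| − b₂/|x|² for |x| ≥ 1/2. Then w is twice continuously differentiable on ℝ²∖{0}. Moreover, if additionally a² − (1+3 ln 2) a + 2(ln 2)² > 0, then w(x) > 0 for every x ∈ ℝ²∖{0}. -/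

import Mathlib

open Real Set

/-- Gluing lemma: derivative of a piecewise function on `(0,∞)` glued at `1/2`. -/
lemma glue_hasDerivAt (f₁ f₂ d₁ d₂ : ℝ → ℝ)
    (h₁ : ∀ r : ℝ, 0 < r → r ≤ 1/2 → HasDerivAt f₁ (d₁ r) r)
    (h₂ : ∀ r : ℝ, 1/2 ≤ r → HasDerivAt f₂ (d₂ r) r)
    (heq : f₁ (1/2) = f₂ (1/2)) (heqd : d₁ (1/2) = d₂ (1/2)) :
    ∀ r : ℝ, 0 < r → HasDerivAt (fun t => if t ≤ 1/2 then f₁ t else f₂ t)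
      (if r ≤ 1/2 then d₁ r else d₂ r) r := by
  intro r hr
  rcases lt_trichotomy r (1/2) with h | h | h
  · rw [if_pos h.le]
    apply (h₁ r hr h.le).congr_of_eventuallyEq
    filter_upwards [eventually_lt_nhds h] with t ht
    rw [if_pos ht.le]
  · subst h
    rw [if_pos le_rfl]
    have hleft : HasDerivWithinAt (fun t => if t ≤ (1:ℝ)/2 then f₁ t else f₂ t)
        (d₁ (1/2)) (Iic (1/2)) (1/2) := by
      apply ((h₁ (1/2) (by norm_num) le_rfl).hasDerivWithinAt).congr
      · intro t ht; rw [if_pos (mem_Iic.mp ht)]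
      · rw [if_pos le_rfl]
    have hright : HasDerivWithinAt (fun t => if t ≤ (1:ℝ)/2 then f₁ t else f₂ t)
        (d₁ (1/2)) (Ici (1/2)) (1/2) := by
      rw [heqd]
      apply ((h₂ (1/2) le_rfl).hasDerivWithinAt).congr
      · intro t ht
        rcases eq_or_lt_of_le (mem_Ici.mp ht) with h' | h'
        · rw [if_pos h'.symm.le, ← h', heq]
        · rw [if_neg (not_le.mpr h')]
      · rw [if_pos le_rfl, heq]
    have := hleft.union hright
    rw [Set.Iic_union_Ici] at this
    exact this.hasDerivAt (by simp)
  · rw [if_neg (not_le.mpr h)]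
    apply (h₂ r h.le).congr_of_eventuallyEq
    filter_upwards [eventually_gt_nhds h] with t ht
    rw [if_neg (not_le.mpr ht)]

/-- Gluing lemma: continuity of a piecewise function on `(0,∞)` glued at `1/2`. -/
lemma glue_continuousAt (f₁ f₂ : ℝ → ℝ)
    (h₁ : ∀ r : ℝ, 0 < r → r ≤ 1/2 → ContinuousAt f₁ r)
    (h₂ : ∀ r : ℝ, 1/2 ≤ r → ContinuousAt f₂ r)
    (heq : f₁ (1/2) = f₂ (1/2)) :
    ∀ r : ℝ, 0 < r → ContinuousAt (fun t => if t ≤ 1/2 then f₁ t else f₂ t) r := by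
  intro r hr
  rcases lt_trichotomy r (1/2) with h | h | h
  · apply (h₁ r hr h.le).congr
    filter_upwards [eventually_lt_nhds h] with t ht
    rw [if_pos ht.le]
  · subst h
    have hleft : ContinuousWithinAt (fun t => if t ≤ (1:ℝ)/2 then f₁ t else f₂ t)
        (Iic (1/2)) (1/2) := by
      apply ((h₁ (1/2) (by norm_num) le_rfl).continuousWithinAt).congr
      · intro t ht; rw [if_pos (mem_Iic.mp ht)]
      · rw [if_pos le_rfl]
    have hright : ContinuousWithinAt (fun t => if t ≤ (1:ℝ)/2 then f₁ t else f₂ t)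
        (Ici (1/2)) (1/2) := by
      apply ((h₂ (1/2) le_rfl).continuousWithinAt).congr
      · intro t ht
        rcases eq_or_lt_of_le (mem_Ici.mp ht) with h' | h'
        · rw [if_pos h'.symm.le, ← h', heq]
        · rw [if_neg (not_le.mpr h')]
      · rw [if_pos le_rfl, heq]
    have := hleft.union hright
    rw [Set.Iic_union_Ici] at this
    exact this.continuousAt (by simp)
  · apply (h₂ r h.le).congr
    filter_upwards [eventually_gt_nhds h] with t ht
    rw [if_neg (not_le.mpr ht)]

lemma weight_deriv1 (a : ℝ) (r : ℝ) (hr : 0 < r) (hr2 : r ≤ 1/2) :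
    HasDerivAt (fun t : ℝ => (-Real.log t) ^ a) (-a * (-Real.log r) ^ (a-1) / r) r := by
  have hlog : 0 < -Real.log r := by
    have : Real.log r < 0 := Real.log_neg hr (by linarith)
    linarith
  have h := ((Real.hasDerivAt_log hr.ne').neg).rpow_const (p := a) (Or.inl hlog.ne')
  refine h.congr_deriv ?_
  simp only [Pi.neg_apply]
  field_simp

lemma weight_deriv2 (a : ℝ) (r : ℝ) (hr : 0 < r) (hr2 : r ≤ 1/2) :
    HasDerivAt (fun t : ℝ => -a * (-Real.log t) ^ (a-1) / t)
      (a*(a-1)*(-Real.log r)^(a-2)/r^2 + a*(-Real.log r)^(a-1)/r^2) r := by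
  have hlog : 0 < -Real.log r := by
    have : Real.log r < 0 := Real.log_neg hr (by linarith)
    linarith
  have h1 := (((Real.hasDerivAt_log hr.ne').neg).rpow_const
      (p := a - 1) (Or.inl hlog.ne')).const_mul (-a)
  have h := h1.div (hasDerivAt_id r) hr.ne'
  refine h.congr_deriv ?_
  have : a - 1 - 1 = a - 2 := by ring
  rw [this] at *
  simp only [Pi.neg_apply, id]
  field_simp
  ring

lemma weight_deriv3 (b₀ b₁ b₂ : ℝ) (r : ℝ) (hr : r ≠ 0) :
    HasDerivAt (fun t : ℝ => b₀ + b₁/t - b₂/t^2) (-b₁/r^2 + 2*b₂/r^3) r := by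
  have h1 : HasDerivAt (fun t : ℝ => b₁/t) (b₁ * -(r^2)⁻¹) r := by
    simpa [div_eq_mul_inv] using (hasDerivAt_inv hr).const_mul b₁
  have hpow : HasDerivAt (fun t : ℝ => t^2) (2*r) r := by
    simpa [mul_comm] using hasDerivAt_pow 2 r
  have h2 : HasDerivAt (fun t : ℝ => b₂/t^2) (b₂ * (-(2*r)/(r^2)^2)) r := by
    simpa [div_eq_mul_inv] using (hpow.inv (pow_ne_zero 2 hr)).const_mul b₂
  have h := ((hasDerivAt_const r b₀).add h1).sub h2
  refine h.congr_deriv ?_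
  field_simp
  ring

lemma weight_deriv4 (b₁ b₂ : ℝ) (r : ℝ) (hr : r ≠ 0) :
    HasDerivAt (fun t : ℝ => -b₁/t^2 + 2*b₂/t^3) (2*b₁/r^3 - 6*b₂/r^4) r := by
  have hpow2 : HasDerivAt (fun t : ℝ => t^2) (2*r) r := by
    simpa [mul_comm] using hasDerivAt_pow 2 r
  have hpow3 : HasDerivAt (fun t : ℝ => t^3) (3*r^2) r := by
    simpa [mul_comm] using hasDerivAt_pow 3 r
  have h1 : HasDerivAt (fun t : ℝ => -b₁/t^2) (-b₁ * (-(2*r)/(r^2)^2)) r := by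
    simpa [div_eq_mul_inv] using (hpow2.inv (pow_ne_zero 2 hr)).const_mul (-b₁)
  have h2 : HasDerivAt (fun t : ℝ => 2*b₂/t^3) (2*b₂ * (-(3*r^2)/(r^3)^2)) r := by
    simpa [div_eq_mul_inv] using (hpow3.inv (pow_ne_zero 3 hr)).const_mul (2*b₂)
  have h := h1.add h2
  refine h.congr_deriv ?_
  field_simp
  ring

lemma weight_cont_e1 (a : ℝ) (r : ℝ) (hr : 0 < r) (hr2 : r ≤ 1/2) :
    ContinuousAt (fun t : ℝ =>
      a*(a-1)*(-Real.log t)^(a-2)/t^2 + a*(-Real.log t)^(a-1)/t^2) r := by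
  have hlog : 0 < -Real.log r := by
    have : Real.log r < 0 := Real.log_neg hr (by linarith)
    linarith
  have hc : ContinuousAt (fun t : ℝ => -Real.log t) r :=
    (Real.continuousAt_log hr.ne').neg
  have h1 := hc.rpow_const (p := a - 2) (Or.inl hlog.ne')
  have h2 := hc.rpow_const (p := a - 1) (Or.inl hlog.ne')
  have hp : ContinuousAt (fun t : ℝ => t^2) r := by fun_prop
  have hpn : (r:ℝ)^2 ≠ 0 := pow_ne_zero 2 hr.ne'
  exact ((h1.const_mul _).div hp hpn).add ((h2.const_mul _).div hp hpn)

lemma weight_cont_e2 (b₁ b₂ : ℝ) (r : ℝ) (hr : r ≠ 0) :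
    ContinuousAt (fun t : ℝ => 2*b₁/t^3 - 6*b₂/t^4) r := by
  have h3 : ContinuousAt (fun t : ℝ => t^3) r := by fun_prop
  have h4 : ContinuousAt (fun t : ℝ => t^4) r := by fun_prop
  exact ((continuousAt_const.div h3 (pow_ne_zero 3 hr))).sub
    ((continuousAt_const.div h4 (pow_ne_zero 4 hr)))

/-- The singular weight used in the uniqueness proof in dimension `N = 2`:
regularity and positivity. -/
theorem weight_dim_two
    (a b₀ b₁ b₂ : ℝ) (ha₀ : 0 < a) (ha₁ : a < 1)
    (hb₀ : b₀ = Real.log 2 ^ (a - 2) *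
      (a ^ 2 - (1 + 3 * Real.log 2) * a + 2 * Real.log 2 ^ 2) / 2)
    (hb₁ : b₁ = a / 2 * Real.log 2 ^ (a - 2) * (1 - a + 2 * Real.log 2))
    (hb₂ : b₂ = a / 8 * Real.log 2 ^ (a - 2) * (1 - a + Real.log 2))
    (w : EuclideanSpace ℝ (Fin 2) → ℝ)
    (hw₁ : ∀ x : EuclideanSpace ℝ (Fin 2), 0 < ‖x‖ → ‖x‖ ≤ 1 / 2 →
      w x = (-Real.log ‖x‖) ^ a)
    (hw₂ : ∀ x : EuclideanSpace ℝ (Fin 2), 1 / 2 ≤ ‖x‖ →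
      w x = b₀ + b₁ / ‖x‖ - b₂ / ‖x‖ ^ 2) :
    ContDiffOn ℝ 2 w {x : EuclideanSpace ℝ (Fin 2) | x ≠ 0} ∧
    (0 < a ^ 2 - (1 + 3 * Real.log 2) * a + 2 * Real.log 2 ^ 2 →
      ∀ x : EuclideanSpace ℝ (Fin 2), x ≠ 0 → 0 < w x) := by
  have hL : 0 < Real.log 2 := Real.log_pos one_lt_two
  have hM : 0 < Real.log 2 ^ (a - 2) := Real.rpow_pos_of_pos hL _
  have hlh : -Real.log (1/2 : ℝ) = Real.log 2 := by
    rw [one_div, Real.log_inv, neg_neg]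
  have hLa : Real.log 2 ^ a = Real.log 2 ^ (a-2) * Real.log 2 ^ 2 := by
    rw [← Real.rpow_natCast (Real.log 2) 2, ← Real.rpow_add hL]
    norm_num
  have hLa1 : Real.log 2 ^ (a-1) = Real.log 2 ^ (a-2) * Real.log 2 := by
    have h := Real.rpow_add hL (a-2) 1
    rw [Real.rpow_one] at h
    rw [show a - 2 + 1 = a - 1 by ring] at h
    exact h
  -- value match
  have heq : (-Real.log (1/2 : ℝ)) ^ a = b₀ + b₁/(1/2 : ℝ) - b₂/(1/2 : ℝ)^2 := by
    rw [hlh, hLa, hb₀, hb₁, hb₂]; ring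
  -- first derivative match
  have heqd : -a * (-Real.log (1/2:ℝ)) ^ (a-1) / (1/2 : ℝ)
      = -b₁/(1/2:ℝ)^2 + 2*b₂/(1/2:ℝ)^3 := by
    rw [hlh, hLa1, hb₁, hb₂]; ring
  -- second derivative match
  have heqdd : a*(a-1)*(-Real.log (1/2:ℝ))^(a-2)/(1/2:ℝ)^2
        + a*(-Real.log (1/2:ℝ))^(a-1)/(1/2:ℝ)^2
      = 2*b₁/(1/2:ℝ)^3 - 6*b₂/(1/2:ℝ)^4 := by
    rw [hlh, hLa1, hb₁, hb₂]; ring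
  -- the radial profile and its first two derivatives
  set g : ℝ → ℝ := fun t => if t ≤ 1/2 then (-Real.log t) ^ a
    else b₀ + b₁/t - b₂/t^2 with hg
  set g₁ : ℝ → ℝ := fun t => if t ≤ 1/2 then -a * (-Real.log t) ^ (a-1) / t
    else -b₁/t^2 + 2*b₂/t^3 with hg₁
  set g₂ : ℝ → ℝ := fun t => if t ≤ 1/2 then
      a*(a-1)*(-Real.log t)^(a-2)/t^2 + a*(-Real.log t)^(a-1)/t^2
    else 2*b₁/t^3 - 6*b₂/t^4 with hg₂
  have K1 : ∀ r : ℝ, 0 < r → HasDerivAt g (g₁ r) r := by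
    intro r hr
    exact glue_hasDerivAt _ _ _ _
      (fun r hr hr2 => weight_deriv1 a r hr hr2)
      (fun r hr => weight_deriv3 b₀ b₁ b₂ r (by positivity))
      heq heqd r hr
  have K2 : ∀ r : ℝ, 0 < r → HasDerivAt g₁ (g₂ r) r := by
    intro r hr
    exact glue_hasDerivAt _ _ _ _
      (fun r hr hr2 => weight_deriv2 a r hr hr2)
      (fun r hr => weight_deriv4 b₁ b₂ r (by positivity))
      heqd heqdd r hr
  have K3 : ∀ r : ℝ, 0 < r → ContinuousAt g₂ r := by
    intro r hr
    exact glue_continuousAt _ _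
      (fun r hr hr2 => weight_cont_e1 a r hr hr2)
      (fun r hr => weight_cont_e2 b₁ b₂ r (by positivity))
      heqdd r hr
  -- the radial profile is C² on (0,∞)
  have hcd : ContDiffOn ℝ 2 g (Ioi 0) := by
    rw [show (2 : WithTop ℕ∞) = 1 + 1 from rfl,
      contDiffOn_succ_iff_deriv_of_isOpen isOpen_Ioi]
    refine ⟨fun r hr => ((K1 r hr).differentiableAt).differentiableWithinAt,
      by simp, ?_⟩
    have hcongr1 : ∀ r ∈ Ioi (0:ℝ), g₁ r = deriv g r :=
      fun r hr => ((K1 r hr).deriv).symm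
    apply ContDiffOn.congr _ (fun r hr => (hcongr1 r hr).symm)
    rw [show (1 : WithTop ℕ∞) = 0 + 1 from rfl,
      contDiffOn_succ_iff_deriv_of_isOpen isOpen_Ioi]
    refine ⟨fun r hr => ((K2 r hr).differentiableAt).differentiableWithinAt,
      by simp, ?_⟩
    have hcongr2 : ∀ r ∈ Ioi (0:ℝ), g₂ r = deriv g₁ r :=
      fun r hr => ((K2 r hr).deriv).symm
    apply ContDiffOn.congr _ (fun r hr => (hcongr2 r hr).symm)
    rw [contDiffOn_zero]
    exact fun r hr => (K3 r hr).continuousWithinAt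
  constructor
  · -- regularity
    have hnorm : ContDiffOn ℝ 2 (fun x : EuclideanSpace ℝ (Fin 2) => ‖x‖)
        {x : EuclideanSpace ℝ (Fin 2) | x ≠ 0} :=
      fun x hx => (contDiffAt_norm ℝ hx).contDiffWithinAt
    have hmaps : MapsTo (fun x : EuclideanSpace ℝ (Fin 2) => ‖x‖)
        {x : EuclideanSpace ℝ (Fin 2) | x ≠ 0} (Ioi 0) :=
      fun x hx => mem_Ioi.mpr (norm_pos_iff.mpr hx)
    have hcomp := hcd.comp hnorm hmaps
    apply hcomp.congr
    intro x hx
    have hxpos : 0 < ‖x‖ := norm_pos_iff.mpr hx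
    by_cases hle : ‖x‖ ≤ 1/2
    · rw [hw₁ x hxpos hle]
      simp only [Function.comp, hg, if_pos hle]
    · rw [hw₂ x (le_of_not_ge hle)]
      simp only [Function.comp, hg, if_neg hle]
  · -- positivity
    intro hpos x hx
    have hxpos : 0 < ‖x‖ := norm_pos_iff.mpr hx
    have hb₀pos : 0 < b₀ := by rw [hb₀]; exact div_pos (mul_pos hM hpos) two_pos
    have hb₂pos : 0 < b₂ := by
      rw [hb₂]
      exact mul_pos (mul_pos (by linarith : (0:ℝ) < a/8) hM) (by linarith)
    have hSpos : 0 < b₀ + b₁/(1/2:ℝ) - b₂/(1/2:ℝ)^2 := by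
      rw [← heq, hlh]
      exact Real.rpow_pos_of_pos hL a
    by_cases hle : ‖x‖ ≤ 1/2
    · rw [hw₁ x hxpos hle]
      have hlog : 0 < -Real.log ‖x‖ := by
        have : Real.log ‖x‖ < 0 := Real.log_neg hxpos (by linarith)
        linarith
      exact Real.rpow_pos_of_pos hlog a
    · push_neg at hle
      rw [hw₂ x hle.le]
      set r := ‖x‖ with hrdef
      have hr2 : (0:ℝ) < r ^ 2 := by positivity
      have hS : 0 < b₀ + 2*b₁ - 4*b₂ := by
        have := hSpos; nlinarith [this]
      have hnum : 0 < b₀ * r^2 + b₁ * r - b₂ := by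
        nlinarith [mul_pos hb₀pos (mul_pos hxpos (sub_pos.mpr hle)),
          mul_pos hS hxpos, hb₂pos, hle]
      have : b₀ + b₁ / r - b₂ / r ^ 2 = (b₀ * r^2 + b₁ * r - b₂) / r^2 := by
        field_simp
      rw [this]
      positivity
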